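/- arXiv:2202.00993 — 2 statements merged into one kernel-verified Lean document; each statement's English description precedes it below -/
import Mathlib

section
/- Let y, ŷ, p : Fin n → ℝ with E[ŷ] = E[y] and E[ŷ²] = E[y²] (empirical means). Then E[(ŷ − p)²] = E[(y − p)²] + 2·Cov(p, y − ŷ), where Cov(a,b) = E[(a − E[a])·(b − E[b])]. (This is Theorem 1 of the paper: minimising MSE against the fair labels equals minimising the original MSE plus twice the covariance of the predictions with the unfairness y − ŷ.) -/
open Finset

/-- Empirical mean of a finite sequence. -/
noncomputable def emean {n : ℕ} (z : Fin n → ℝ) : ℝ := (∑ i, z i) / n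

/-- Empirical covariance of two finite sequences. -/
noncomputable def ecov {n : ℕ} (a b : Fin n → ℝ) : ℝ :=
  emean (fun i => (a i - emean a) * (b i - emean b))

lemma emean_add {n : ℕ} (a b : Fin n → ℝ) :
    emean (fun i => a i + b i) = emean a + emean b := by
  simp [emean, Finset.sum_add_distrib, add_div]

lemma emean_sub {n : ℕ} (a b : Fin n → ℝ) :
    emean (fun i => a i - b i) = emean a - emean b := by
  simp [emean, Finset.sum_sub_distrib, div_sub_div_same]

lemma emean_const_mul {n : ℕ} (c : ℝ) (a : Fin n → ℝ) :
    emean (fun i => c * a i) = c * emean a := by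
  simp [emean, ← Finset.mul_sum, mul_div_assoc]

/-- Theorem 1: minimising MSE against the fair labels equals minimising the original
MSE plus twice the covariance of the predictions with the unfairness `y − ŷ`. -/
theorem mse_fair_decomposition {n : ℕ} (y yhat p : Fin n → ℝ)
    (h1 : emean yhat = emean y)
    (h2 : emean (fun i => yhat i ^ 2) = emean (fun i => y i ^ 2)) :
    emean (fun i => (yhat i - p i) ^ 2) =
      emean (fun i => (y i - p i) ^ 2) + 2 * ecov p (fun i => y i - yhat i) := by
  have hd : emean (fun i => y i - yhat i) = 0 := by
    rw [emean_sub, h1]; ring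
  have hcov : ecov p (fun i => y i - yhat i)
      = emean (fun i => p i * (y i - yhat i)) := by
    unfold ecov
    rw [hd]
    have : (fun i => (p i - emean p) * (y i - yhat i - 0))
        = fun i => p i * (y i - yhat i) - emean p * (y i - yhat i) := by
      funext i; ring
    rw [this, emean_sub, emean_const_mul, hd]
    ring
  have key : (fun i => (yhat i - p i) ^ 2)
      = fun i => ((y i - p i) ^ 2 + (yhat i ^ 2 - y i ^ 2))
          + 2 * (p i * (y i - yhat i)) := by
    funext i; ring
  rw [key, hcov, emean_add, emean_add, emean_sub, h2, emean_const_mul]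
  ring
end

section
/- Let y, ŷ : Fin n → ℝ with E[ŷ] = E[y] and E[ŷ²] = E[y²]. Then for any two prediction vectors p₁, p₂ : Fin n → ℝ, (E[(ŷ − p₁)²] − E[(ŷ − p₂)²]) − (E[(y − p₁)²] − E[(y − p₂)²]) = 2·Cov(p₁ − p₂, y − ŷ). In particular, the fair objective and the original MSE induce the same ordering on predictors that differ by a vector uncorrelated with the unfairness y − ŷ. -/
open Finset

theorem fair_objective_ordering {n : ℕ} (y yhat : Fin n → ℝ)
    (h1 : emean yhat = emean y)
    (h2 : emean (fun i => yhat i ^ 2) = emean (fun i => y i ^ 2)) :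
    ∀ p₁ p₂ : Fin n → ℝ,
      (emean (fun i => (yhat i - p₁ i) ^ 2) - emean (fun i => (yhat i - p₂ i) ^ 2)) -
        (emean (fun i => (y i - p₁ i) ^ 2) - emean (fun i => (y i - p₂ i) ^ 2)) =
      2 * ecov (fun i => p₁ i - p₂ i) (fun i => y i - yhat i) := by
  intro p₁ p₂
  rcases n with _ | n
  · simp [emean, ecov]
  · have hn : ((Nat.succ n : ℕ) : ℝ) ≠ 0 := by positivity
    have hsum : ∑ i, yhat i = ∑ i, y i := by
      unfold emean at h1
      field_simp at h1; linarith
    have hbsum : ∑ i, (y i - yhat i) = 0 := by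
      rw [Finset.sum_sub_distrib, hsum, sub_self]
    have hecov : ecov (fun i => p₁ i - p₂ i) (fun i => y i - yhat i)
        = (∑ i, (p₁ i - p₂ i) * (y i - yhat i)) / ((Nat.succ n : ℕ) : ℝ) := by
      unfold ecov emean
      rw [hbsum]
      simp only [zero_div, sub_zero]
      congr 1
      rw [show (∑ i, ((p₁ i - p₂ i) - (∑ j, (p₁ j - p₂ j)) / ((Nat.succ n : ℕ) : ℝ)) * (y i - yhat i))
          = ∑ i, ((p₁ i - p₂ i) * (y i - yhat i)
            - ((∑ j, (p₁ j - p₂ j)) / ((Nat.succ n : ℕ) : ℝ)) * (y i - yhat i)) from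
        Finset.sum_congr rfl (fun i _ => by ring)]
      rw [Finset.sum_sub_distrib, ← Finset.mul_sum, hbsum, mul_zero, sub_zero]
    rw [hecov]
    unfold emean
    rw [div_sub_div_same, div_sub_div_same, div_sub_div_same, ← mul_div_assoc]
    congr 1
    rw [← Finset.sum_sub_distrib, ← Finset.sum_sub_distrib, ← Finset.sum_sub_distrib,
      Finset.mul_sum]
    exact Finset.sum_congr rfl (fun i _ => by ring)
end
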